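/- Let ρ>0 and suppose ∇f and every ∇h_i (i=1,…,mE) and every ∇g_i (i=1,…,mI) are Lipschitz continuous on ℝⁿ with constant L. Then for all x, d ∈ ℝⁿ and all α ∈ [0,1]: P_ρ(x+αd) − P_ρ(x) ≤ α P'_ρ(x;d) + ((ρ + mE + mI)L/2) α² ‖d‖², where P'_ρ(x;d) := ρ∇f(x)ᵀd + c'(x;d) − c(x). Consequently, for any σ ∈ (0,1) and any m > 0, if P'_ρ(x;d) ≤ −(m/2)‖d‖², then the Armijo condition P_ρ(x+αd) − P_ρ(x) ≤ σ α P'_ρ(x;d) holds for every α ∈ (0, β], where β = min{1, (1−σ)m/((ρ+mE+mI)L)} does not depend on x or d. -/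

import Mathlib

open RealInnerProductSpace

section Aux

variable {n : ℕ}
local notation "E" => EuclideanSpace ℝ (Fin n)

lemma inner_gradient_eq (φ : E → ℝ) (a d : E) :
    ⟪gradient φ a, d⟫ = fderiv ℝ φ a d := by
  rw [gradient, InnerProductSpace.toDual_symm_apply]

lemma gradient_neg' (φ : E → ℝ) (a : E) :
    gradient (fun y => -φ y) a = -gradient φ a := by
  rw [gradient, gradient, fderiv_fun_neg, map_neg]

lemma descent_one (φ : E → ℝ) (hφ : ContDiff ℝ 1 φ) (L : ℝ)
    (hLip : ∀ a b : E, ‖gradient φ a - gradient φ b‖ ≤ L * ‖a - b‖)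
    (x d : E) (α : ℝ) (hα : 0 ≤ α) :
    φ (x + α • d) - φ x ≤ α * ⟪gradient φ x, d⟫ + L / 2 * α ^ 2 * ‖d‖ ^ 2 := by
  set ψ : ℝ → ℝ := fun t => φ (x + t • d) - t * ⟪gradient φ x, d⟫ - L * ‖d‖ ^ 2 * t ^ 2 / 2 with hψdef
  have hψ : ∀ t : ℝ, HasDerivAt ψ
      (⟪gradient φ (x + t • d), d⟫ - ⟪gradient φ x, d⟫ - L * ‖d‖ ^ 2 * t) t := by
    intro t
    have h1 : HasDerivAt (fun t : ℝ => x + t • d) d t := by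
      simpa using ((hasDerivAt_id t).smul_const d).const_add x
    have h2 : HasDerivAt (fun t : ℝ => φ (x + t • d)) (fderiv ℝ φ (x + t • d) d) t :=
      ((hφ.differentiable one_ne_zero (x + t • d)).hasFDerivAt).comp_hasDerivAt t h1
    rw [← inner_gradient_eq] at h2
    have h3 : HasDerivAt (fun t : ℝ => t * ⟪gradient φ x, d⟫) ⟪gradient φ x, d⟫ t := by
      simpa using (hasDerivAt_id t).mul_const ⟪gradient φ x, d⟫
    have h4 : HasDerivAt (fun t : ℝ => L * ‖d‖ ^ 2 * t ^ 2 / 2) (L * ‖d‖ ^ 2 * t) t := by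
      have := ((hasDerivAt_pow 2 t).const_mul (L * ‖d‖ ^ 2)).div_const 2
      simpa using this.congr_deriv (by ring)
    exact (h2.sub h3).sub h4
  have hanti : AntitoneOn ψ (Set.Icc 0 α) := by
    apply antitoneOn_of_deriv_nonpos (convex_Icc 0 α)
    · exact (Continuous.continuousOn (by
        exact continuous_iff_continuousAt.2 fun t => (hψ t).continuousAt))
    · intro t ht
      exact (hψ t).differentiableAt.differentiableWithinAt
    · intro t ht
      rw [interior_Icc] at ht
      rw [(hψ t).deriv]
      have hb : ⟪gradient φ (x + t • d) - gradient φ x, d⟫ ≤ L * ‖d‖ ^ 2 * t := by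
        calc ⟪gradient φ (x + t • d) - gradient φ x, d⟫
            ≤ ‖gradient φ (x + t • d) - gradient φ x‖ * ‖d‖ := real_inner_le_norm _ _
          _ ≤ (L * ‖x + t • d - x‖) * ‖d‖ := by
              have := hLip (x + t • d) x
              nlinarith [norm_nonneg d]
          _ = L * ‖d‖ ^ 2 * t := by
              rw [add_sub_cancel_left, norm_smul]
              simp [abs_of_nonneg ht.1.le]
              ring
      rw [inner_sub_left] at hb
      linarith
  have h0 : (0 : ℝ) ∈ Set.Icc (0:ℝ) α := Set.left_mem_Icc.2 hα
  have h1 : α ∈ Set.Icc (0:ℝ) α := Set.right_mem_Icc.2 hα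
  have := hanti h0 h1 hα
  simp only [hψdef] at this
  simp only [zero_smul, add_zero, zero_mul] at this
  nlinarith [this]

lemma descent_abs (φ : E → ℝ) (hφ : ContDiff ℝ 1 φ) (L : ℝ)
    (hLip : ∀ a b : E, ‖gradient φ a - gradient φ b‖ ≤ L * ‖a - b‖)
    (x d : E) (α : ℝ) (hα : 0 ≤ α) :
    |φ (x + α • d) - (φ x + α * ⟪gradient φ x, d⟫)| ≤ L / 2 * α ^ 2 * ‖d‖ ^ 2 := by
  have h1 := descent_one φ hφ L hLip x d α hα
  have h2 := descent_one (fun y => -φ y) (hφ.neg) L (by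
    intro a b
    rw [gradient_neg', gradient_neg']
    have e : -gradient φ a - -gradient φ b = -(gradient φ a - gradient φ b) := by abel
    rw [e, norm_neg]
    exact hLip a b) x d α hα
  simp only [gradient_neg', inner_neg_left] at h2
  rw [abs_le]
  constructor <;> nlinarith [h1, h2]

lemma abs_conv (a t α : ℝ) (h0 : 0 ≤ α) (h1 : α ≤ 1) :
    |a + α * t| ≤ |a| + α * (|a + t| - |a|) := by
  have e : a + α * t = (1 - α) * a + α * (a + t) := by ring
  calc |a + α * t| = |(1 - α) * a + α * (a + t)| := by rw [e]
    _ ≤ |(1 - α) * a| + |α * (a + t)| := abs_add_le _ _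
    _ = (1 - α) * |a| + α * |a + t| := by
        rw [abs_mul, abs_mul, abs_of_nonneg h0, abs_of_nonneg (by linarith)]
    _ = |a| + α * (|a + t| - |a|) := by ring

lemma max_neg_eq (u : ℝ) : max 0 (-u) = (|u| - u) / 2 := by
  rcases le_total 0 u with hu | hu
  · rw [abs_of_nonneg hu, max_eq_left (by linarith)]; ring
  · rw [abs_of_nonpos hu, max_eq_right (by linarith)]; ring

lemma max_conv (a t α : ℝ) (h0 : 0 ≤ α) (h1 : α ≤ 1) :
    max 0 (-(a + α * t)) ≤ max 0 (-a) + α * (max 0 (-(a + t)) - max 0 (-a)) := by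
  rw [max_neg_eq, max_neg_eq, max_neg_eq]
  have := abs_conv a t α h0 h1
  nlinarith [this]

lemma abs_lip (u v : ℝ) : |u| ≤ |v| + |u - v| := by
  have := abs_sub_abs_le_abs_sub u v; linarith

lemma max_lip (u v : ℝ) : max 0 (-u) ≤ max 0 (-v) + |u - v| := by
  rw [max_neg_eq, max_neg_eq]
  have h1 := abs_sub_abs_le_abs_sub u v
  have h2 : v - u ≤ |u - v| := by rw [abs_sub_comm]; exact le_abs_self _
  linarith

end Aux

theorem stmt13 {n mE mI : ℕ}
    (f : EuclideanSpace ℝ (Fin n) → ℝ)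
    (h : Fin mE → EuclideanSpace ℝ (Fin n) → ℝ)
    (g : Fin mI → EuclideanSpace ℝ (Fin n) → ℝ)
    (hf : ContDiff ℝ 1 f) (hh : ∀ i, ContDiff ℝ 1 (h i)) (hg : ∀ i, ContDiff ℝ 1 (g i))
    (ρ : ℝ) (hρ : 0 < ρ)
    (L : ℝ) (hL : 0 ≤ L)
    (hLf : ∀ a b : EuclideanSpace ℝ (Fin n),
      ‖gradient f a - gradient f b‖ ≤ L * ‖a - b‖)
    (hLh : ∀ i, ∀ a b : EuclideanSpace ℝ (Fin n),
      ‖gradient (h i) a - gradient (h i) b‖ ≤ L * ‖a - b‖)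
    (hLg : ∀ i, ∀ a b : EuclideanSpace ℝ (Fin n),
      ‖gradient (g i) a - gradient (g i) b‖ ≤ L * ‖a - b‖) :
    (∀ (x d : EuclideanSpace ℝ (Fin n)), ∀ α ∈ Set.Icc (0:ℝ) 1,
      (ρ * f (x + α • d) + ((∑ i, |h i (x + α • d)|) + ∑ i, max 0 (-(g i (x + α • d)))))
        - (ρ * f x + ((∑ i, |h i x|) + ∑ i, max 0 (-(g i x)))) ≤
      α * (ρ * ⟪gradient f x, d⟫ +
            ((∑ i, |h i x + ⟪gradient (h i) x, d⟫|) +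
              ∑ i, max 0 (-(g i x + ⟪gradient (g i) x, d⟫))) -
            ((∑ i, |h i x|) + ∑ i, max 0 (-(g i x)))) +
        (ρ + mE + mI) * L / 2 * α ^ 2 * ‖d‖ ^ 2) ∧
    (∀ σ ∈ Set.Ioo (0:ℝ) 1, ∀ m : ℝ, 0 < m →
      ∀ (x d : EuclideanSpace ℝ (Fin n)),
      ρ * ⟪gradient f x, d⟫ +
          ((∑ i, |h i x + ⟪gradient (h i) x, d⟫|) +
            ∑ i, max 0 (-(g i x + ⟪gradient (g i) x, d⟫))) -
          ((∑ i, |h i x|) + ∑ i, max 0 (-(g i x))) ≤ -(m / 2) * ‖d‖ ^ 2 →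
      ∀ α ∈ Set.Ioc (0:ℝ) (min 1 ((1 - σ) * m / ((ρ + mE + mI) * L))),
        (ρ * f (x + α • d) +
            ((∑ i, |h i (x + α • d)|) + ∑ i, max 0 (-(g i (x + α • d)))))
          - (ρ * f x + ((∑ i, |h i x|) + ∑ i, max 0 (-(g i x)))) ≤
        σ * α * (ρ * ⟪gradient f x, d⟫ +
            ((∑ i, |h i x + ⟪gradient (h i) x, d⟫|) +
              ∑ i, max 0 (-(g i x + ⟪gradient (g i) x, d⟫))) -
            ((∑ i, |h i x|) + ∑ i, max 0 (-(g i x))))) := by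
  have part1 : ∀ (x d : EuclideanSpace ℝ (Fin n)), ∀ α ∈ Set.Icc (0:ℝ) 1,
      (ρ * f (x + α • d) + ((∑ i, |h i (x + α • d)|) + ∑ i, max 0 (-(g i (x + α • d)))))
        - (ρ * f x + ((∑ i, |h i x|) + ∑ i, max 0 (-(g i x)))) ≤
      α * (ρ * ⟪gradient f x, d⟫ +
            ((∑ i, |h i x + ⟪gradient (h i) x, d⟫|) +
              ∑ i, max 0 (-(g i x + ⟪gradient (g i) x, d⟫))) -
            ((∑ i, |h i x|) + ∑ i, max 0 (-(g i x)))) +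
        (ρ + mE + mI) * L / 2 * α ^ 2 * ‖d‖ ^ 2 := by
    intro x d α hα
    obtain ⟨hα0, hα1⟩ := hα
    have keyf := descent_one f hf L hLf x d α hα0
    have keyfρ := mul_le_mul_of_nonneg_left keyf hρ.le
    have keyh : ∀ i, |h i (x + α • d)| ≤
        |h i x| + α * (|h i x + ⟪gradient (h i) x, d⟫| - |h i x|)
          + L / 2 * α ^ 2 * ‖d‖ ^ 2 := by
      intro i
      have hd := descent_abs (h i) (hh i) L (hLh i) x d α hα0
      have hl := abs_lip (h i (x + α • d)) (h i x + α * ⟪gradient (h i) x, d⟫)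
      have hc := abs_conv (h i x) ⟪gradient (h i) x, d⟫ α hα0 hα1
      linarith
    have keyg : ∀ i, max 0 (-(g i (x + α • d))) ≤
        max 0 (-(g i x)) + α * (max 0 (-(g i x + ⟪gradient (g i) x, d⟫)) - max 0 (-(g i x)))
          + L / 2 * α ^ 2 * ‖d‖ ^ 2 := by
      intro i
      have hd := descent_abs (g i) (hg i) L (hLg i) x d α hα0
      have hl := max_lip (g i (x + α • d)) (g i x + α * ⟪gradient (g i) x, d⟫)
      have hc := max_conv (g i x) ⟪gradient (g i) x, d⟫ α hα0 hα1
      linarith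
    have SH := Finset.sum_le_sum (fun i (_ : i ∈ Finset.univ) => keyh i)
    have SG := Finset.sum_le_sum (fun i (_ : i ∈ Finset.univ) => keyg i)
    simp only [mul_sub, Finset.sum_add_distrib, Finset.sum_sub_distrib,
      Finset.sum_const, Finset.card_univ, Fintype.card_fin, nsmul_eq_mul,
      ← Finset.mul_sum] at SH SG
    push_cast at SH SG ⊢
    nlinarith [keyfρ, SH, SG]
  refine ⟨part1, ?_⟩
  intro σ hσ m hm x d hP α hα
  obtain ⟨hσ0, hσ1⟩ := hσ
  obtain ⟨hα0, hα1⟩ := hα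
  rcases hL.eq_or_lt with hL0 | hL0
  · exfalso
    rw [← hL0] at hα1
    simp at hα1
    linarith
  · have hden : (0:ℝ) < (ρ + mE + mI) * L := by positivity
    have hα1' : α ≤ 1 := hα1.trans (min_le_left _ _)
    have hαc : α ≤ (1 - σ) * m / ((ρ + mE + mI) * L) := hα1.trans (min_le_right _ _)
    have hαc' : α * ((ρ + mE + mI) * L) ≤ (1 - σ) * m := by
      rw [← le_div_iff₀ hden]; exact hαc
    have hp1 := part1 x d α ⟨hα0.le, hα1'⟩
    have hD : (0:ℝ) ≤ ‖d‖ ^ 2 := by positivity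
    nlinarith [hp1, hP, mul_nonneg (mul_nonneg (by linarith : (0:ℝ) ≤ 1 - σ) hα0.le)
        (by linarith : (0:ℝ) ≤ -(m / 2) * ‖d‖ ^ 2 - (ρ * ⟪gradient f x, d⟫ +
          ((∑ i, |h i x + ⟪gradient (h i) x, d⟫|) +
            ∑ i, max 0 (-(g i x + ⟪gradient (g i) x, d⟫))) -
          ((∑ i, |h i x|) + ∑ i, max 0 (-(g i x))))),
      mul_nonpos_of_nonpos_of_nonneg
        (by linarith : α * ((ρ + mE + mI) * L) - (1 - σ) * m ≤ 0)
        (by positivity : (0:ℝ) ≤ α * ‖d‖ ^ 2 / 2)]
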